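/- Let c₁, c₂, c₃ ∈ [−1,1] be such that λ_{mn} = (1/4)·(1 + (−1)^m c₁ − (−1)^{m+n} c₂ + (−1)^n c₃) ≥ 0 for all m,n ∈ {0,1} (i.e. the Bell-diagonal state (1/4)(I₄ + Σᵢ cᵢ σᵢ⊗σᵢ) is a valid density matrix). Then the partial transpose of the local-cloning output ρ̃ = (1/4)·(I₄ + (4/9)·Σᵢ cᵢ σᵢ⊗σᵢ) fails to be positive semidefinite (equivalently, ρ̃ is entangled) if and only if |c₁| + |c₂| + |c₃| > 9/4. This characterizes the conic broadcastable regions of Bell-diagonal states under local cloning. -/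

import Mathlib

open Matrix Kronecker
open scoped ComplexOrder

/-- The three Pauli matrices. -/
noncomputable def pauli : Fin 3 → Matrix (Fin 2) (Fin 2) ℂ :=
  ![!![0, 1; 1, 0], !![0, -Complex.I; Complex.I, 0], !![1, 0; 0, -1]]

/-- Partial transpose on the second qubit:
`(ρ^{T₂})_{(i,μ),(j,ν)} = ρ_{(i,ν),(j,μ)}`. -/
noncomputable def ptranspose (ρ : Matrix (Fin 2 × Fin 2) (Fin 2 × Fin 2) ℂ) :
    Matrix (Fin 2 × Fin 2) (Fin 2 × Fin 2) ℂ :=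
  Matrix.of fun p q => ρ (p.1, q.2) (q.1, p.2)

/-- Auxiliary: explicit form of the partial transpose of the cloner output. -/
noncomputable def Mmat (a b c : ℝ) : Matrix (Fin 2 × Fin 2) (Fin 2 × Fin 2) ℂ :=
  Matrix.of fun p q =>
    if p = q then (if p.1 = p.2 then (((1+c)/4 : ℝ) : ℂ) else (((1-c)/4 : ℝ) : ℂ))
    else if p.1 ≠ q.1 ∧ p.2 ≠ q.2 then
      (if p.1 = p.2 then (((a+b)/4 : ℝ) : ℂ) else (((a-b)/4 : ℝ) : ℂ))
    else 0

set_option maxHeartbeats 2000000 in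
lemma hMeq (c₁ c₂ c₃ : ℝ) :
    ptranspose ((1/4 : ℂ) • ((1 : Matrix (Fin 2 × Fin 2) (Fin 2 × Fin 2) ℂ)
        + (4/9 : ℂ) • ((c₁ : ℂ) • (pauli 0 ⊗ₖ pauli 0) + (c₂ : ℂ) • (pauli 1 ⊗ₖ pauli 1)
            + (c₃ : ℂ) • (pauli 2 ⊗ₖ pauli 2))))
    = Mmat ((4/9)*c₁) ((4/9)*c₂) ((4/9)*c₃) := by
  ext ⟨i, μ⟩ ⟨j, ν⟩
  fin_cases i <;> fin_cases μ <;> fin_cases j <;> fin_cases ν <;>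
    simp [ptranspose, Mmat, pauli, Matrix.one_apply, Complex.ext_iff, Prod.ext_iff] <;> ring

lemma Mmat_herm (a b c : ℝ) : (Mmat a b c).IsHermitian := by
  ext ⟨i, μ⟩ ⟨j, ν⟩
  fin_cases i <;> fin_cases μ <;> fin_cases j <;> fin_cases ν <;>
    simp [Mmat, Matrix.conjTranspose_apply, Prod.ext_iff, Complex.conj_ofReal]

lemma quadform (a b c : ℝ) (x : Fin 2 × Fin 2 → ℂ) :
    star x ⬝ᵥ (Mmat a b c).mulVec x =
      ((((1+c)/4 : ℝ) : ℂ) * (star (x (0,0)) * x (0,0) + star (x (1,1)) * x (1,1))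
        + (((a+b)/4 : ℝ) : ℂ) * (star (x (0,0)) * x (1,1) + star (x (1,1)) * x (0,0)))
      + ((((1-c)/4 : ℝ) : ℂ) * (star (x (0,1)) * x (0,1) + star (x (1,0)) * x (1,0))
        + (((a-b)/4 : ℝ) : ℂ) * (star (x (0,1)) * x (1,0) + star (x (1,0)) * x (0,1))) := by
  simp [Mmat, dotProduct, mulVec, Fintype.sum_prod_type, Fin.sum_univ_two, Prod.ext_iff]
  ring

lemma quadnn (α β : ℝ) (h : |β| ≤ α) (u v : ℂ) :
    0 ≤ (α : ℂ) * (star u * u + star v * v) + (β : ℂ) * (star u * v + star v * u) := by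
  have h1 : star u * u + star v * v = ((Complex.normSq u + Complex.normSq v : ℝ) : ℂ) := by
    simp [Complex.normSq_eq_conj_mul_self, Complex.star_def]
  have h2 : star u * v + star v * u = ((2 * ((starRingEnd ℂ) u * v).re : ℝ) : ℂ) := by
    have hvu : (starRingEnd ℂ) v * u = (starRingEnd ℂ) ((starRingEnd ℂ) u * v) := by
      rw [_root_.map_mul, Complex.conj_conj]; ring
    rw [show (star u : ℂ) = (starRingEnd ℂ) u from rfl,
      show (star v : ℂ) = (starRingEnd ℂ) v from rfl, hvu, Complex.add_conj]
  rw [h1, h2, ← Complex.ofReal_mul, ← Complex.ofReal_mul, ← Complex.ofReal_add]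
  rw [Complex.zero_le_real]
  have hre : |((starRingEnd ℂ) u * v).re| ≤ ‖u‖ * ‖v‖ := by
    calc |((starRingEnd ℂ) u * v).re| ≤ ‖(starRingEnd ℂ) u * v‖ :=
          Complex.abs_re_le_norm _
      _ = ‖u‖ * ‖v‖ := by rw [norm_mul, Complex.norm_conj]
  have hnsq : Complex.normSq u = (‖u‖)^2 := (Complex.sq_norm u).symm
  have hnsqv : Complex.normSq v = (‖v‖)^2 := (Complex.sq_norm v).symm
  have habs : |β| * (2 * (‖u‖ * ‖v‖))
      ≤ α * ((‖u‖)^2 + (‖v‖)^2) := by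
    have h2ab : 2 * (‖u‖ * ‖v‖)
        ≤ (‖u‖)^2 + (‖v‖)^2 := by
      nlinarith [sq_nonneg (‖u‖ - ‖v‖)]
    have hb0 : 0 ≤ |β| := abs_nonneg β
    nlinarith [mul_nonneg hb0 (mul_nonneg (norm_nonneg u) (norm_nonneg v))]
  have hb : |β * (2 * ((starRingEnd ℂ) u * v).re)|
      ≤ α * ((‖u‖)^2 + (‖v‖)^2) := by
    rw [abs_mul, abs_mul]
    calc |β| * (|2| * |((starRingEnd ℂ) u * v).re|)
        ≤ |β| * (2 * (‖u‖ * ‖v‖)) := by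
          apply mul_le_mul_of_nonneg_left _ (abs_nonneg β)
          rw [abs_two]
          exact mul_le_mul_of_nonneg_left hre (by norm_num)
      _ ≤ _ := habs
  rw [hnsq, hnsqv]
  linarith [neg_abs_le (β * (2 * ((starRingEnd ℂ) u * v).re)), hb]

/-- Broadcastable region of Bell-diagonal states under local cloning.  If the
Bell-diagonal state with parameters `c₁, c₂, c₃ ∈ [−1,1]` is a valid density matrix (all
eigenvalues `λ_{mn} ≥ 0`), then the nonlocal output `ρ̃₁₄ = {0, 0, (4/9)T^b}` of the
Buzek–Hillery local optimal cloner has non-positive-semidefinite partial transpose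
(i.e. is entangled) iff `|c₁| + |c₂| + |c₃| > 9/4`. -/
theorem belldiagonal_broadcasting_range_local (c₁ c₂ c₃ : ℝ)
    (hc1 : c₁ ∈ Set.Icc (-1 : ℝ) 1) (hc2 : c₂ ∈ Set.Icc (-1 : ℝ) 1)
    (hc3 : c₃ ∈ Set.Icc (-1 : ℝ) 1)
    (hEig : ∀ m n : Fin 2, 0 ≤ (1/4 : ℝ) * (1 + (-1)^(m : ℕ) * c₁
        - (-1)^((m : ℕ) + (n : ℕ)) * c₂ + (-1)^(n : ℕ) * c₃)) :
    ¬ (ptranspose ((1/4 : ℂ) • ((1 : Matrix (Fin 2 × Fin 2) (Fin 2 × Fin 2) ℂ)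
        + (4/9 : ℂ) • ((c₁ : ℂ) • (pauli 0 ⊗ₖ pauli 0) + (c₂ : ℂ) • (pauli 1 ⊗ₖ pauli 1)
            + (c₃ : ℂ) • (pauli 2 ⊗ₖ pauli 2))))).PosSemidef
    ↔ 9/4 < |c₁| + |c₂| + |c₃| := by
  rw [hMeq]
  constructor
  · -- ¬PSD → 9/4 < |c₁|+|c₂|+|c₃| (contrapositive)
    intro hnps
    by_contra hS
    push_neg at hS
    apply hnps
    refine Matrix.PosSemidef.of_dotProduct_mulVec_nonneg (Mmat_herm _ _ _) fun x => ?_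
    rw [quadform]
    have k1 : |((4/9)*c₁ + (4/9)*c₂)/4| ≤ (1 + (4/9)*c₃)/4 := by
      rw [abs_le]
      constructor <;>
        [ (nlinarith [le_abs_self c₁, neg_abs_le c₁, le_abs_self c₂, neg_abs_le c₂,
            le_abs_self c₃, neg_abs_le c₃]);
          (nlinarith [le_abs_self c₁, neg_abs_le c₁, le_abs_self c₂, neg_abs_le c₂,
            le_abs_self c₃, neg_abs_le c₃]) ]
    have k2 : |((4/9)*c₁ - (4/9)*c₂)/4| ≤ (1 - (4/9)*c₃)/4 := by
      rw [abs_le]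
      constructor <;>
        [ (nlinarith [le_abs_self c₁, neg_abs_le c₁, le_abs_self c₂, neg_abs_le c₂,
            le_abs_self c₃, neg_abs_le c₃]);
          (nlinarith [le_abs_self c₁, neg_abs_le c₁, le_abs_self c₂, neg_abs_le c₂,
            le_abs_self c₃, neg_abs_le c₃]) ]
    exact add_nonneg (quadnn _ _ k1 _ _) (quadnn _ _ k2 _ _)
  · intro hS hps
    have h00 := hEig 0 0
    have h01 := hEig 0 1
    have h10 := hEig 1 0
    have h11 := hEig 1 1
    norm_num at h00 h01 h10 h11
    have key : 9/4 < c₁ + c₂ - c₃ ∨ 9/4 < -c₁ - c₂ - c₃ ∨ 9/4 < c₁ - c₂ + c₃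
        ∨ 9/4 < -c₁ + c₂ + c₃ := by
      rcases abs_cases c₁ with ⟨e1, _⟩ | ⟨e1, _⟩ <;>
        rcases abs_cases c₂ with ⟨e2, _⟩ | ⟨e2, _⟩ <;>
        rcases abs_cases c₃ with ⟨e3, _⟩ | ⟨e3, _⟩ <;>
        first
          | (left; linarith)
          | (right; left; linarith)
          | (right; right; left; linarith)
          | (right; right; right; linarith)
    rcases key with k | k | k | k
    · -- witness x = (1,0,0,-1)
      set x : Fin 2 × Fin 2 → ℂ := fun p => if p = ((0:Fin 2), (0:Fin 2)) then 1
        else if p = ((1:Fin 2), (1:Fin 2)) then -1 else 0 with hx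
      have hq := hps.dotProduct_mulVec_nonneg x
      rw [quadform] at hq
      have hx00 : x (0,0) = 1 := by simp [hx]
      have hx11 : x (1,1) = -1 := by simp [hx, Prod.ext_iff]
      have hx01 : x (0,1) = 0 := by simp [hx, Prod.ext_iff]
      have hx10 : x (1,0) = 0 := by simp [hx, Prod.ext_iff]
      rw [hx00, hx11, hx01, hx10] at hq
      simp only [star_one, star_zero, star_neg, mul_zero, mul_one, mul_neg, neg_neg,
        add_zero, zero_add, neg_zero] at hq
      have hq' : (0:ℝ) ≤ ((1 + (4/9)*c₃)/4) * 2 + (((4/9)*c₁ + (4/9)*c₂)/4) * (-2) := by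
        have : ((0:ℝ) : ℂ) ≤ ((((1 + (4/9)*c₃)/4) * 2 + (((4/9)*c₁ + (4/9)*c₂)/4) * (-2) : ℝ) : ℂ) := by
          convert hq using 1 <;> push_cast <;> ring
        exact_mod_cast this
      linarith
    · -- witness x = (1,0,0,1)
      set x : Fin 2 × Fin 2 → ℂ := fun p => if p = ((0:Fin 2), (0:Fin 2)) then 1
        else if p = ((1:Fin 2), (1:Fin 2)) then 1 else 0 with hx
      have hq := hps.dotProduct_mulVec_nonneg x
      rw [quadform] at hq
      have hx00 : x (0,0) = 1 := by simp [hx]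
      have hx11 : x (1,1) = 1 := by simp [hx, Prod.ext_iff]
      have hx01 : x (0,1) = 0 := by simp [hx, Prod.ext_iff]
      have hx10 : x (1,0) = 0 := by simp [hx, Prod.ext_iff]
      rw [hx00, hx11, hx01, hx10] at hq
      simp only [star_one, star_zero, star_neg, mul_zero, mul_one, mul_neg, neg_neg,
        add_zero, zero_add, neg_zero] at hq
      have hq' : (0:ℝ) ≤ ((1 + (4/9)*c₃)/4) * 2 + (((4/9)*c₁ + (4/9)*c₂)/4) * 2 := by
        have : ((0:ℝ) : ℂ) ≤ ((((1 + (4/9)*c₃)/4) * 2 + (((4/9)*c₁ + (4/9)*c₂)/4) * 2 : ℝ) : ℂ) := by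
          convert hq using 1 <;> push_cast <;> ring
        exact_mod_cast this
      linarith
    · -- witness x = (0,1,-1,0)
      set x : Fin 2 × Fin 2 → ℂ := fun p => if p = ((0:Fin 2), (1:Fin 2)) then 1
        else if p = ((1:Fin 2), (0:Fin 2)) then -1 else 0 with hx
      have hq := hps.dotProduct_mulVec_nonneg x
      rw [quadform] at hq
      have hx00 : x (0,0) = 0 := by simp [hx, Prod.ext_iff]
      have hx11 : x (1,1) = 0 := by simp [hx, Prod.ext_iff]
      have hx01 : x (0,1) = 1 := by simp [hx]
      have hx10 : x (1,0) = -1 := by simp [hx, Prod.ext_iff]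
      rw [hx00, hx11, hx01, hx10] at hq
      simp only [star_one, star_zero, star_neg, mul_zero, mul_one, mul_neg, neg_neg,
        add_zero, zero_add, neg_zero] at hq
      have hq' : (0:ℝ) ≤ ((1 - (4/9)*c₃)/4) * 2 + (((4/9)*c₁ - (4/9)*c₂)/4) * (-2) := by
        have : ((0:ℝ) : ℂ) ≤ ((((1 - (4/9)*c₃)/4) * 2 + (((4/9)*c₁ - (4/9)*c₂)/4) * (-2) : ℝ) : ℂ) := by
          convert hq using 1 <;> push_cast <;> ring
        exact_mod_cast this
      linarith
    · -- witness x = (0,1,1,0)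
      set x : Fin 2 × Fin 2 → ℂ := fun p => if p = ((0:Fin 2), (1:Fin 2)) then 1
        else if p = ((1:Fin 2), (0:Fin 2)) then 1 else 0 with hx
      have hq := hps.dotProduct_mulVec_nonneg x
      rw [quadform] at hq
      have hx00 : x (0,0) = 0 := by simp [hx, Prod.ext_iff]
      have hx11 : x (1,1) = 0 := by simp [hx, Prod.ext_iff]
      have hx01 : x (0,1) = 1 := by simp [hx]
      have hx10 : x (1,0) = 1 := by simp [hx, Prod.ext_iff]
      rw [hx00, hx11, hx01, hx10] at hq
      simp only [star_one, star_zero, star_neg, mul_zero, mul_one, mul_neg, neg_neg,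
        add_zero, zero_add, neg_zero] at hq
      have hq' : (0:ℝ) ≤ ((1 - (4/9)*c₃)/4) * 2 + (((4/9)*c₁ - (4/9)*c₂)/4) * 2 := by
        have : ((0:ℝ) : ℂ) ≤ ((((1 - (4/9)*c₃)/4) * 2 + (((4/9)*c₁ - (4/9)*c₂)/4) * 2 : ℝ) : ℂ) := by
          convert hq using 1 <;> push_cast <;> ring
        exact_mod_cast this
      linarith
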